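/- Let W : ℝᵐ → ℝ be continuous and nonnegative, let u ∈ H¹((a,b); ℝᵐ), and let ε > 0. Then for any a ≤ c < d ≤ b, ∫_c^d [ (ε/2)|u_x|² + W(u)/ε ] dx ≥ √2 ∫_c^d √(W(u(x))) |u_x(x)| dx ≥ φ(u(c), u(d)), where φ is the geodesic distance induced by the conformal metric √(2W)|dz|. -/

import Mathlib

open MeasureTheory

/-- The geodesic distance induced by the degenerate conformal metric `√(2W) |dz|`. -/
noncomputable def geoDist {m : ℕ} (W : EuclideanSpace ℝ (Fin m) → ℝ)
    (ξ₁ ξ₂ : EuclideanSpace ℝ (Fin m)) : ℝ :=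
  sInf { e : ℝ | ∃ z z' : ℝ → EuclideanSpace ℝ (Fin m),
    (∀ s, HasDerivAt z (z' s) s) ∧ Continuous z' ∧ z 0 = ξ₁ ∧ z 1 = ξ₂ ∧
    e = Real.sqrt 2 * ∫ s in (0:ℝ)..1, Real.sqrt (W (z s)) * ‖z' s‖ }

theorem stmt18 {m : ℕ} (W : EuclideanSpace ℝ (Fin m) → ℝ) (hWc : Continuous W)
    (hWnn : ∀ ξ, 0 ≤ W ξ) (a b c d ε : ℝ) (hε : 0 < ε)
    (hac : a ≤ c) (hcd : c < d) (hdb : d ≤ b)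
    (u u' : ℝ → EuclideanSpace ℝ (Fin m))
    (hu : ∀ x, HasDerivAt u (u' x) x) (hu' : Continuous u') :
    Real.sqrt 2 * (∫ x in c..d, Real.sqrt (W (u x)) * ‖u' x‖) ≤
        ∫ x in c..d, (ε / 2 * ‖u' x‖ ^ 2 + W (u x) / ε) ∧
      geoDist W (u c) (u d) ≤
        Real.sqrt 2 * ∫ x in c..d, Real.sqrt (W (u x)) * ‖u' x‖ := by
  have hu_cont : Continuous u := by
    rw [continuous_iff_continuousAt]; exact fun x => (hu x).continuousAt
  have hg_cont : Continuous (fun x => Real.sqrt (W (u x)) * ‖u' x‖) :=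
    ((hWc.comp hu_cont).sqrt).mul hu'.norm
  constructor
  · -- Young's inequality part
    rw [← intervalIntegral.integral_const_mul]
    apply intervalIntegral.integral_mono_on hcd.le
    · exact ((continuous_const.mul hg_cont)).intervalIntegrable c d
    · exact ((continuous_const.mul (hu'.norm.pow 2)).add
        ((hWc.comp hu_cont).div_const ε)).intervalIntegrable c d
    · intro x _
      set A := ‖u' x‖ with hA
      have hAnn : 0 ≤ A := norm_nonneg _
      have hW : 0 ≤ W (u x) := hWnn _
      have h1 : Real.sqrt (W (u x)) ^ 2 = W (u x) := Real.sq_sqrt hW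
      have h2 : Real.sqrt 2 ^ 2 = 2 := Real.sq_sqrt (by norm_num)
      have hs2 : 0 ≤ Real.sqrt 2 := Real.sqrt_nonneg 2
      have hsW : 0 ≤ Real.sqrt (W (u x)) := Real.sqrt_nonneg _
      obtain ⟨B, hB⟩ : ∃ B, Real.sqrt (W (u x)) = B := ⟨_, rfl⟩
      have hBnn : 0 ≤ B := hB ▸ hsW
      have h1' : B ^ 2 = W (u x) := by rw [← hB]; exact h1
      rw [← h1', Real.sqrt_sq hBnn]
      have hmul : (2 * ε) * (Real.sqrt 2 * (B * A)) ≤ (2 * ε) * (ε / 2 * A ^ 2 + B ^ 2 / ε) := by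
        have hrhs : (2 * ε) * (ε / 2 * A ^ 2 + B ^ 2 / ε) = ε ^ 2 * A ^ 2 + 2 * B ^ 2 := by
          field_simp
        rw [hrhs]
        nlinarith [sq_nonneg (ε * A - Real.sqrt 2 * B), h2, hAnn, hBnn, hε.le]
      exact le_of_mul_le_mul_left hmul (by positivity)
  · -- geodesic distance part
    set S := { e : ℝ | ∃ z z' : ℝ → EuclideanSpace ℝ (Fin m),
      (∀ s, HasDerivAt z (z' s) s) ∧ Continuous z' ∧ z 0 = u c ∧ z 1 = u d ∧
      e = Real.sqrt 2 * ∫ s in (0:ℝ)..1, Real.sqrt (W (z s)) * ‖z' s‖ } with hS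
    have hbdd : BddBelow S := by
      refine ⟨0, ?_⟩
      rintro e ⟨z, z', hz, hz', h0, h1, rfl⟩
      have : 0 ≤ ∫ s in (0:ℝ)..1, Real.sqrt (W (z s)) * ‖z' s‖ :=
        intervalIntegral.integral_nonneg (by norm_num)
          (fun s _ => mul_nonneg (Real.sqrt_nonneg _) (norm_nonneg _))
      positivity
    have hdc : d - c ≠ 0 := sub_ne_zero.mpr (ne_of_gt hcd)
    have hdcpos : 0 < d - c := sub_pos.mpr hcd
    refine csInf_le hbdd ?_
    refine ⟨fun s => u ((d - c) * s + c), fun s => (d - c) • u' ((d - c) * s + c),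
      ?_, ?_, by simp, by congr 1; ring, ?_⟩
    · intro s
      have hL : HasDerivAt (fun s : ℝ => (d - c) * s + c) (d - c) s := by
        simpa using ((hasDerivAt_id s).const_mul (d - c)).add_const c
      exact (hu ((d - c) * s + c)).scomp s hL
    · exact (continuous_const : Continuous fun _ : ℝ => d - c).smul (hu'.comp (by continuity : Continuous fun s : ℝ => (d - c) * s + c))
    · have hint : ∫ s in (0:ℝ)..1, (fun x => Real.sqrt (W (u x)) * ‖u' x‖) ((d - c) * s + c)
          = (d - c)⁻¹ • ∫ x in ((d-c)*0+c)..((d-c)*1+c), Real.sqrt (W (u x)) * ‖u' x‖ :=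
        intervalIntegral.integral_comp_mul_add (fun x => Real.sqrt (W (u x)) * ‖u' x‖) hdc c
      have e1 : (d-c)*0+c = c := by ring
      have e2 : (d-c)*1+c = d := by ring
      rw [e1, e2] at hint
      have : (∫ s in (0:ℝ)..1, Real.sqrt (W (u ((d - c) * s + c))) *
          ‖(d - c) • u' ((d - c) * s + c)‖)
          = ∫ x in c..d, Real.sqrt (W (u x)) * ‖u' x‖ := by
        have : ∀ s : ℝ, Real.sqrt (W (u ((d - c) * s + c))) * ‖(d - c) • u' ((d - c) * s + c)‖
            = (d - c) * ((fun x => Real.sqrt (W (u x)) * ‖u' x‖) ((d - c) * s + c)) := by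
          intro s
          rw [norm_smul, Real.norm_eq_abs, abs_of_pos hdcpos]
          ring
        rw [intervalIntegral.integral_congr (fun s _ => this s),
          intervalIntegral.integral_const_mul, hint, smul_eq_mul]
        field_simp
      rw [this]
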